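/- arXiv:2301.11160 — 2 statements merged into one kernel-verified Lean document; each statement's English description precedes it below -/
import Mathlib

section
/- Let L ⊂ ℂ × ℝ be a uniformly discrete subset (there exists ε > 0 such that any two distinct points of L, viewed in ℝ³ ≅ ℂ × ℝ, are at Euclidean distance at least ε). Then there exists a constant C > 0 depending only on L such that for every integer k ≥ 6, ∑_{(α,β)∈L} (k/2π)^k / ((k/2π + |α|²/2)² + β²)^{k/2} ≤ C·√k. -/
open Real

/-- `gz i = max(|i|-1, 0)` as a real number. -/
noncomputable def hzGz (i : ℤ) : ℝ := max (|(i : ℝ)| - 1) 0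

lemma hzGz_nonneg (i : ℤ) : 0 ≤ hzGz i := le_max_right _ _

lemma hz_tele {d : ℝ} (hd : 0 < d) :
    Summable (fun n : ℕ => 1 / (1 + d * n) ^ 2) ∧
    ∑' n : ℕ, 1 / (1 + d * n) ^ 2 ≤ 1 + 1 / d := by
  have hnn : ∀ n : ℕ, (0:ℝ) ≤ 1 / (1 + d * n) ^ 2 := fun n => by positivity
  set g : ℕ → ℝ := fun n => 1/d * (1/(1 + d * n)) with hg
  have key : ∀ N : ℕ, ∑ n ∈ Finset.range N, 1 / (1 + d * n) ^ 2 ≤ 1 + 1 / d := by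
    intro N
    cases N with
    | zero => simp; positivity
    | succ M =>
      rw [Finset.sum_range_succ']
      have h0 : (1:ℝ) / (1 + d * (0:ℕ)) ^ 2 = 1 := by norm_num
      rw [h0]
      have step : ∀ n : ℕ, 1 / (1 + d * ((n:ℕ)+1:ℕ)) ^ 2 ≤ g n - g (n+1) := by
        intro n
        have h1 : (0:ℝ) < 1 + d * n := by positivity
        have h2 : (0:ℝ) < 1 + d * ((n:ℝ)+1) := by positivity
        have hcast : ((n+1:ℕ):ℝ) = (n:ℝ) + 1 := by push_cast; ring
        simp only [hg, hcast]
        have heq : 1/d * (1/(1 + d * n)) - 1/d * (1/(1 + d * ((n:ℝ)+1)))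
            = 1 / ((1 + d * n) * (1 + d * ((n:ℝ)+1))) := by
          field_simp
          ring
        rw [heq]
        apply div_le_div_of_nonneg_left one_pos.le (by positivity)
        nlinarith
      calc ∑ n ∈ Finset.range M, 1 / (1 + d * ((n:ℕ)+1:ℕ)) ^ 2 + 1
          ≤ ∑ n ∈ Finset.range M, (g n - g (n+1)) + 1 := by
            gcongr with n _
            exact step n
        _ = (g 0 - g M) + 1 := by rw [Finset.sum_range_sub' g]
        _ ≤ 1 + 1 / d := by
            have h1 : (0:ℝ) < 1 + d * M := by positivity
            have : (0:ℝ) ≤ g M := by simp only [hg]; positivity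
            have : g 0 = 1/d := by simp [hg]
            linarith
  have hsum : Summable (fun n : ℕ => 1 / (1 + d * n) ^ 2) :=
    summable_of_sum_range_le hnn key
  exact ⟨hsum, tsum_le_of_sum_range_le hnn key⟩

lemma hzGz_natcast_add_one (n : ℕ) : hzGz ((n : ℤ) + 1) = n := by
  unfold hzGz
  have : ((((n:ℤ) + 1) : ℤ) : ℝ) = (n:ℝ) + 1 := by push_cast; ring
  rw [this, abs_of_nonneg (by positivity)]
  simp

lemma hzGz_neg (i : ℤ) : hzGz (-i) = hzGz i := by
  unfold hzGz
  push_cast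
  rw [abs_neg]

lemma hz_zsum {d : ℝ} (hd : 0 < d) :
    Summable (fun i : ℤ => 1 / (1 + d * hzGz i) ^ 2) ∧
    ∑' i : ℤ, 1 / (1 + d * hzGz i) ^ 2 ≤ 3 + 2 / d := by
  obtain ⟨hs, hb⟩ := hz_tele hd
  have e1 : (fun n : ℕ => 1 / (1 + d * hzGz ((n:ℤ) + 1)) ^ 2)
      = fun n : ℕ => 1 / (1 + d * n) ^ 2 := by
    funext n; rw [hzGz_natcast_add_one]
  have e2 : (fun n : ℕ => 1 / (1 + d * hzGz (-((n:ℤ) + 1))) ^ 2)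
      = fun n : ℕ => 1 / (1 + d * n) ^ 2 := by
    funext n; rw [hzGz_neg, hzGz_natcast_add_one]
  have hs1 : Summable (fun n : ℕ => 1 / (1 + d * hzGz ((n:ℤ) + 1)) ^ 2) := by
    rw [e1]; exact hs
  have hs2 : Summable (fun n : ℕ => 1 / (1 + d * hzGz (-((n:ℤ) + 1))) ^ 2) := by
    rw [e2]; exact hs
  have hzero : (1:ℝ) / (1 + d * hzGz 0) ^ 2 = 1 := by
    unfold hzGz; norm_num
  constructor
  · exact Summable.of_add_one_of_neg_add_one hs1 hs2
  · have heq := tsum_of_add_one_of_neg_add_one (f := fun i : ℤ => 1 / (1 + d * hzGz i) ^ 2) hs1 hs2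
    rw [heq, hzero, e1, e2]
    have h2 : 3 + 2/d = (1 + 1/d) + 1 + (1 + 1/d) := by ring
    rw [h2]
    gcongr

lemma hz_sixth {c m : ℝ} (hc : 0 < c) (hm : 0 ≤ m) :
    1 / Real.sqrt (1 + c * m ^ 6) ≤ 4 / (1 + min 1 c * m) ^ 2 := by
  set d := min 1 c with hd
  have hd0 : 0 < d := lt_min one_pos hc
  have hd1 : d ≤ 1 := min_le_left _ _
  have hdc : d ≤ c := min_le_right _ _
  have hm46 : m ^ 4 ≤ 1 + m ^ 6 := by nlinarith [sq_nonneg (m^3 - m), sq_nonneg (m^2 - 1)]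
  have h4 : (1 + d * m) ^ 4 ≤ 16 * (1 + c * m ^ 6) := by
    have hdm : 0 ≤ d * m := by positivity
    have h1 : (1 + d * m) ^ 2 ≤ 2 * (1 + (d*m)^2) := by nlinarith [sq_nonneg (1 - d*m)]
    have h2 : (1 + (d*m)^2) ^ 2 ≤ 2 * (1 + (d*m)^4) := by nlinarith [sq_nonneg (1 - (d*m)^2)]
    have h3 : (d*m)^4 ≤ 1 + c * m ^ 6 := by
      have hd3 : d^3 ≤ 1 := pow_le_one₀ hd0.le hd1
      have hd4 : d^4 ≤ d := by nlinarith
      have : (d*m)^4 = d^4 * m^4 := by ring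
      rw [this]
      have h5 : d^4 * m^4 ≤ d * m^4 := by nlinarith [pow_nonneg hm 4]
      have h6 : d * m^4 ≤ d * (1 + m^6) := by nlinarith
      have h7 : d * (1 + m^6) ≤ 1 + c * m^6 := by nlinarith [pow_nonneg hm 6]
      linarith
    calc (1 + d*m)^4 = ((1 + d*m)^2)^2 := by ring
      _ ≤ (2 * (1 + (d*m)^2))^2 := by
          apply pow_le_pow_left₀ (by positivity) h1 2
      _ = 4 * (1 + (d*m)^2)^2 := by ring
      _ ≤ 4 * (2 * (1 + (d*m)^4)) := by linarith
      _ ≤ 16 * (1 + c * m ^ 6) := by nlinarith [mul_nonneg hc.le (pow_nonneg hm 6)]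
  have hsq : (1 + d * m) ^ 2 / 4 ≤ Real.sqrt (1 + c * m ^ 6) := by
    rw [show (1 + c * m ^ 6) = Real.sqrt (1 + c*m^6) ^ 2 from
      (Real.sq_sqrt (by positivity)).symm] at h4
    nlinarith [Real.sqrt_nonneg (1 + c * m ^ 6), sq_nonneg ((1+d*m)^2/4 - Real.sqrt (1+c*m^6))]
  have hP : (0:ℝ) < (1 + d * m) ^ 2 := by positivity
  have hS : (0:ℝ) < Real.sqrt (1 + c * m ^ 6) := by
    apply Real.sqrt_pos.mpr; positivity
  rw [div_le_div_iff₀ hS hP]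
  nlinarith

set_option maxHeartbeats 1000000 in

lemma hz_pointwise {k : ℕ} (hk : 6 ≤ k) (x y β : ℝ) :
    ((k:ℝ)/(2*π))^k / ((((k:ℝ)/(2*π) + (x^2+y^2)/2)^2 + β^2) ^ ((k:ℝ)/2)) ≤
      (1 / Real.sqrt (1 + (π^3/216) * x^6)) * (1 / Real.sqrt (1 + (π^3/216) * y^6)) *
        (2 / (1 + π * |β| / Real.sqrt k)^2) := by
  have hπ : (0:ℝ) < π := Real.pi_pos
  have hk0 : (0:ℝ) < k := by exact_mod_cast Nat.lt_of_lt_of_le (by norm_num) hk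
  set a : ℝ := (k:ℝ)/(2*π) with ha_def
  have ha : 0 < a := by positivity
  set t : ℝ := (x^2+y^2)/2 with ht_def
  have ht : 0 ≤ t := by positivity
  set X : ℝ := (a + t)^2 + β^2 with hX_def
  have hat : 0 < a + t := by linarith
  have hXpos : 0 < X := by positivity
  have hX1 : (a+t)^2 ≤ X := le_add_of_nonneg_right (sq_nonneg β)
  have hX2 : a^2 + β^2 ≤ X := by nlinarith
  have hab : (0:ℝ) < a^2 + β^2 := by positivity
  -- the two Bernoulli factors
  set cx : ℝ := (π^3/216) * x^6 with hcx_def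
  set cy : ℝ := (π^3/216) * y^6 with hcy_def
  have hcx : 0 ≤ cx := by positivity
  have hcy : 0 ≤ cy := by positivity
  set w : ℝ := π * |β| / Real.sqrt k with hw_def
  have hw : 0 ≤ w := by positivity
  -- Step A : X^(k/2) ≥ (a+t)^(k/2) * (a²+β²)^(k/4)
  have sqrpow : ∀ z : ℝ, 0 < z → (z^2) ^ ((k:ℝ)/4) = z ^ ((k:ℝ)/2) := by
    intro z hz
    rw [← Real.rpow_natCast z 2, ← Real.rpow_mul hz.le]
    congr 1
    push_cast
    ring
  have hXsq : (a+t)^2 * (a^2+β^2) ≤ X^2 := by nlinarith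
  have hA : (a+t) ^ ((k:ℝ)/2) * (a^2+β^2) ^ ((k:ℝ)/4) ≤ X ^ ((k:ℝ)/2) := by
    rw [← sqrpow X hXpos, ← sqrpow (a+t) hat]
    rw [← Real.mul_rpow (by positivity) (by positivity)]
    exact Real.rpow_le_rpow (by positivity) hXsq (by positivity)
  -- Step B : (a+t)^(k/2) ≥ a^(k/2) * (1 + cx + cy)
  have hB : a ^ ((k:ℝ)/2) * (1 + cx + cy) ≤ (a + t) ^ ((k:ℝ)/2) := by
    have hsplit : a + t = a * (1 + t/a) := by field_simp
    have h1ta : (0:ℝ) < 1 + t/a := by positivity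
    rw [hsplit, Real.mul_rpow ha.le h1ta.le]
    have hbern : 1 + π * t / 3 ≤ (1 + t/a) ^ ((k:ℝ)/6) := by
      have hta : (0:ℝ) ≤ t/a := by positivity
      have := one_add_mul_self_le_rpow_one_add (s := t/a)
        (by linarith : (-1:ℝ) ≤ t/a) (p := (k:ℝ)/6)
        (by linarith [show (6:ℝ) ≤ (k:ℝ) from by exact_mod_cast hk] : (1:ℝ) ≤ (k:ℝ)/6)
      have harith : (k:ℝ)/6 * (t/a) = π * t / 3 := by
        rw [ha_def]; field_simp; ring
      rw [harith] at this
      linarith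
    have hcube : (1 + t/a) ^ ((k:ℝ)/2) = ((1 + t/a) ^ ((k:ℝ)/6)) ^ (3:ℕ) := by
      rw [← Real.rpow_natCast _ 3, ← Real.rpow_mul h1ta.le]
      congr 1
      push_cast
      ring
    have hw3 : 1 + cx + cy ≤ (1 + π * t / 3) ^ 3 := by
      have hxy6 : x^6 + y^6 ≤ (x^2+y^2)^3 := by
        have hkey : (0:ℝ) ≤ x^2 * y^2 * (x^2 + y^2) :=
          mul_nonneg (mul_nonneg (sq_nonneg x) (sq_nonneg y))
            (add_nonneg (sq_nonneg x) (sq_nonneg y))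
        nlinarith [hkey]
      have hpt : 0 ≤ π * t / 3 := by positivity
      have hcube3' : ∀ u : ℝ, 0 ≤ u → 1 + u^3 ≤ (1+u)^3 := by
        intro u hu; nlinarith [sq_nonneg u]
      have hcube3 : 1 + (π*t/3)^3 ≤ (1 + π*t/3)^3 := hcube3' _ hpt
      have hw3' : cx + cy ≤ (π*t/3)^3 := by
        rw [hcx_def, hcy_def, ht_def]
        have hπ3 : (0:ℝ) ≤ π^3/216 := by positivity
        calc π^3/216 * x^6 + π^3/216 * y^6 = π^3/216 * (x^6 + y^6) := by ring
          _ ≤ π^3/216 * (x^2+y^2)^3 := mul_le_mul_of_nonneg_left hxy6 hπ3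
          _ = (π*((x^2+y^2)/2)/3)^3 := by ring
      linarith
    calc a ^ ((k:ℝ)/2) * (1 + cx + cy)
        ≤ a ^ ((k:ℝ)/2) * (1 + π * t / 3)^3 :=
          mul_le_mul_of_nonneg_left hw3 (Real.rpow_nonneg ha.le _)
      _ ≤ a ^ ((k:ℝ)/2) * ((1 + t/a) ^ ((k:ℝ)/6)) ^ (3:ℕ) := by
          have h3 : (1 + π * t / 3)^3 ≤ ((1 + t/a) ^ ((k:ℝ)/6)) ^ (3:ℕ) :=
            pow_le_pow_left₀ (by positivity) hbern 3
          exact mul_le_mul_of_nonneg_left h3 (Real.rpow_nonneg ha.le _)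
      _ = a ^ ((k:ℝ)/2) * (1 + t/a) ^ ((k:ℝ)/2) := by rw [← hcube]
  -- Step C : (a²+β²)^(k/4) ≥ a^(k/2) * (1+w)²/2
  have hC : a ^ ((k:ℝ)/2) * ((1 + w)^2 / 2) ≤ (a^2 + β^2) ^ ((k:ℝ)/4) := by
    have hsplit : a^2 + β^2 = a^2 * (1 + β^2/a^2) := by field_simp
    have h1v : (0:ℝ) < 1 + β^2/a^2 := by positivity
    rw [hsplit, Real.mul_rpow (by positivity) h1v.le, sqrpow a ha]
    have hbern : 1 + π^2 * β^2 / k ≤ (1 + β^2/a^2) ^ ((k:ℝ)/4) := by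
      have hva : (0:ℝ) ≤ β^2/a^2 := by positivity
      have := one_add_mul_self_le_rpow_one_add (s := β^2/a^2)
        (by linarith : (-1:ℝ) ≤ β^2/a^2) (p := (k:ℝ)/4)
        (by linarith [show (6:ℝ) ≤ (k:ℝ) from by exact_mod_cast hk] : (1:ℝ) ≤ (k:ℝ)/4)
      have harith : (k:ℝ)/4 * (β^2/a^2) = π^2 * β^2 / k := by
        rw [ha_def]; field_simp; ring
      rw [harith] at this
      linarith
    have hw2 : (1 + w)^2 / 2 ≤ 1 + π^2 * β^2 / k := by
      have hwsq : w^2 = π^2 * β^2 / k := by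
        rw [hw_def, div_pow, mul_pow, sq_abs, Real.sq_sqrt hk0.le]
      nlinarith [sq_nonneg (1 - w)]
    calc a ^ ((k:ℝ)/2) * ((1 + w)^2 / 2)
        ≤ a ^ ((k:ℝ)/2) * (1 + π^2 * β^2 / k) :=
          mul_le_mul_of_nonneg_left hw2 (Real.rpow_nonneg ha.le _)
      _ ≤ a ^ ((k:ℝ)/2) * (1 + β^2/a^2) ^ ((k:ℝ)/4) :=
          mul_le_mul_of_nonneg_left hbern (Real.rpow_nonneg ha.le _)
  -- combine the denominator bound
  set Q : ℝ := (1 + cx + cy) * ((1 + w)^2 / 2) with hQ_def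
  have hQpos : 0 < Q := by
    rw [hQ_def]; positivity
  have hak : a ^ ((k:ℝ)/2) * a ^ ((k:ℝ)/2) = a ^ k := by
    rw [← Real.rpow_add ha, ← Real.rpow_natCast a k]
    norm_num
  have hden : a ^ k * Q ≤ X ^ ((k:ℝ)/2) := by
    have h1 : a ^ ((k:ℝ)/2) * (1 + cx + cy) ≥ 0 := by positivity
    have h2 : a ^ ((k:ℝ)/2) * ((1 + w)^2 / 2) ≥ 0 := by positivity
    calc a ^ k * Q = (a ^ ((k:ℝ)/2) * (1 + cx + cy)) * (a ^ ((k:ℝ)/2) * ((1 + w)^2/2)) := by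
          rw [← hak]; ring
      _ ≤ (a+t) ^ ((k:ℝ)/2) * (a^2+β^2) ^ ((k:ℝ)/4) := by
          apply mul_le_mul hB hC h2 (by positivity)
      _ ≤ X ^ ((k:ℝ)/2) := hA
  have hfQ : a ^ k / X ^ ((k:ℝ)/2) ≤ 1 / Q := by
    rw [div_le_div_iff₀ (by positivity) hQpos]
    calc a ^ k * Q ≤ X ^ ((k:ℝ)/2) := hden
      _ = 1 * X ^ ((k:ℝ)/2) := by ring
  -- compare Q with the product of square roots
  set s1 : ℝ := Real.sqrt (1 + cx) with hs1_def
  set s2 : ℝ := Real.sqrt (1 + cy) with hs2_def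
  have hs1 : 0 < s1 := Real.sqrt_pos.mpr (by positivity)
  have hs2 : 0 < s2 := Real.sqrt_pos.mpr (by positivity)
  have hss : s1 * s2 ≤ 1 + cx + cy := by
    rw [hs1_def, hs2_def, ← Real.sqrt_mul (by positivity)]
    have h1 : (1 + cx) * (1 + cy) ≤ (1 + cx + cy)^2 := by nlinarith
    calc Real.sqrt ((1+cx)*(1+cy)) ≤ Real.sqrt ((1 + cx + cy)^2) := Real.sqrt_le_sqrt h1
      _ = 1 + cx + cy := Real.sqrt_sq (by positivity)
  set R : ℝ := s1 * s2 * ((1 + w)^2 / 2) with hR_def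
  have hRpos : 0 < R := by rw [hR_def]; positivity
  have hRQ : R ≤ Q := by
    rw [hR_def, hQ_def]
    have : (0:ℝ) ≤ (1 + w)^2 / 2 := by positivity
    nlinarith
  have hQR : 1 / Q ≤ 1 / R := one_div_le_one_div_of_le hRpos hRQ
  have hfin : (1:ℝ) / R = (1/s1) * (1/s2) * (2/(1+w)^2) := by
    rw [hR_def]
    have h1w : (0:ℝ) < (1+w)^2 := by positivity
    field_simp
  calc a ^ k / X ^ ((k:ℝ)/2) ≤ 1 / Q := hfQ
    _ ≤ 1 / R := hQR
    _ = (1/s1) * (1/s2) * (2/(1+w)^2) := hfin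


lemma hz_floor_abs {s u : ℝ} (hs : 0 < s) : s * hzGz ⌊u/s⌋ ≤ |u| := by
  have h1 : ((⌊u/s⌋ : ℤ) : ℝ) ≤ u/s := Int.floor_le _
  have h2 : u/s < (⌊u/s⌋ : ℤ) + 1 := Int.lt_floor_add_one _
  unfold hzGz
  rcases le_or_gt 0 ((⌊u/s⌋ : ℤ) : ℝ) with hpos | hneg
  · have hgl : max (|((⌊u/s⌋:ℤ):ℝ)| - 1) 0 ≤ ((⌊u/s⌋:ℤ):ℝ) := by
      rw [abs_of_nonneg hpos]; exact max_le (by linarith) hpos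
    have hu : s * ((⌊u/s⌋:ℤ):ℝ) ≤ u := by
      rw [mul_comm, ← le_div_iff₀ hs]; exact h1
    calc s * max (|((⌊u/s⌋:ℤ):ℝ)| - 1) 0 ≤ s * ((⌊u/s⌋:ℤ):ℝ) :=
          mul_le_mul_of_nonneg_left hgl hs.le
      _ ≤ u := hu
      _ ≤ |u| := le_abs_self u
  · have hgl : max (|((⌊u/s⌋:ℤ):ℝ)| - 1) 0 = -((⌊u/s⌋:ℤ):ℝ) - 1 := by
      have hile : ((⌊u/s⌋:ℤ):ℝ) ≤ -1 := by
        have h3 : (⌊u/s⌋ : ℤ) < 0 := by exact_mod_cast hneg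
        have h4 : (⌊u/s⌋ : ℤ) ≤ -1 := by omega
        exact_mod_cast h4
      rw [abs_of_neg hneg]; exact max_eq_left (by linarith)
    have hu : u < s * (((⌊u/s⌋:ℤ):ℝ) + 1) := by
      rw [mul_comm, ← div_lt_iff₀ hs]; exact h2
    rw [hgl]
    have hneg' : -|u| ≤ u := neg_abs_le u
    nlinarith

lemma hz_coord_diff {s u v : ℝ} (hs : 0 < s) (h : ⌊u/s⌋ = ⌊v/s⌋) : |u - v| < s := by
  have h1 := Int.abs_sub_lt_one_of_floor_eq_floor h
  have h2 : u - v = (u/s - v/s) * s := by field_simp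
  rw [h2, abs_mul, abs_of_pos hs]
  calc |u/s - v/s| * s < 1 * s := by
        apply mul_lt_mul_of_pos_right h1 hs
    _ = s := one_mul s

set_option maxHeartbeats 1000000 in
/-- **Cusp-stabilizer contribution to the Bergman kernel**: if `L ⊂ ℂ × ℝ` is uniformly
discrete (for the Euclidean distance on `ℝ³ ≅ ℂ × ℝ`), then there is `C > 0` depending
only on `L` such that for every integer `k ≥ 6`,
`∑_{(α,β)∈L} (k/2π)^k / ((k/2π + |α|²/2)² + β²)^{k/2} ≤ C √k`. -/
theorem heisenberg_lattice_sum_bound (L : Set (ℂ × ℝ))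
    (hL : ∃ ε > 0, ∀ p ∈ L, ∀ q ∈ L, p ≠ q →
      ε ≤ Real.sqrt (‖p.1 - q.1‖ ^ 2 + (p.2 - q.2) ^ 2)) :
    ∃ C > 0, ∀ k : ℕ, 6 ≤ k →
      Summable (fun p : L => ((k : ℝ) / (2 * Real.pi)) ^ k /
        ((((k : ℝ) / (2 * Real.pi) + ‖(p : ℂ × ℝ).1‖ ^ 2 / 2) ^ 2 +
          (p : ℂ × ℝ).2 ^ 2) ^ ((k : ℝ) / 2))) ∧
      ∑' p : L, ((k : ℝ) / (2 * Real.pi)) ^ k /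
        ((((k : ℝ) / (2 * Real.pi) + ‖(p : ℂ × ℝ).1‖ ^ 2 / 2) ^ 2 +
          (p : ℂ × ℝ).2 ^ 2) ^ ((k : ℝ) / 2)) ≤ C * Real.sqrt k := by
  obtain ⟨ε, hε, hsep⟩ := hL
  have hπ : (0:ℝ) < π := Real.pi_pos
  set s : ℝ := ε / 2 with hs_def
  have hs : 0 < s := by positivity
  set c : ℝ := (π^3/216) * s^6 with hc_def
  have hc : 0 < c := by positivity
  set d₁ : ℝ := min 1 c with hd1_def
  have hd₁ : 0 < d₁ := lt_min one_pos hc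
  set C₁ : ℝ := 4 * (3 + 2 / d₁) with hC1_def
  have hC₁pos : 0 < C₁ := by positivity
  set C₂ : ℝ := 2 * (3 + 2 / (π * s)) with hC2_def
  have hC₂pos : 0 < C₂ := by positivity
  refine ⟨C₁ * C₁ * C₂, by positivity, ?_⟩
  intro k hk
  have hk0 : (0:ℝ) < k := by
    have : (6:ℝ) ≤ (k:ℝ) := by exact_mod_cast hk
    linarith
  have hsk : (1:ℝ) ≤ Real.sqrt k := by
    rw [show (1:ℝ) = Real.sqrt 1 from (Real.sqrt_one).symm]
    apply Real.sqrt_le_sqrt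
    have : (6:ℝ) ≤ (k:ℝ) := by exact_mod_cast hk
    linarith
  have hsk0 : (0:ℝ) < Real.sqrt k := by linarith
  set d₂ : ℝ := π * s / Real.sqrt k with hd2_def
  have hd₂ : 0 < d₂ := by positivity
  -- the comparison functions
  set F₁ : ℤ → ℝ := fun i => 4 * (1 / (1 + d₁ * hzGz i) ^ 2) with hF1_def
  set F₂ : ℤ → ℝ := fun n => 2 * (1 / (1 + d₂ * hzGz n) ^ 2) with hF2_def
  have hF₁nn : ∀ i, 0 ≤ F₁ i := fun i => by rw [hF1_def]; positivity
  have hF₂nn : ∀ n, 0 ≤ F₂ n := fun n => by rw [hF2_def]; positivity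
  have hF₁s : Summable F₁ := ((hz_zsum hd₁).1.mul_left 4)
  have hF₂s : Summable F₂ := ((hz_zsum hd₂).1.mul_left 2)
  have hF₁b : ∑' i, F₁ i ≤ C₁ := by
    rw [hF1_def, hC1_def]
    rw [tsum_mul_left]
    have := (hz_zsum hd₁).2
    nlinarith
  have hF₂b : ∑' n, F₂ n ≤ C₂ * Real.sqrt k := by
    rw [hF2_def, tsum_mul_left]
    have h1 := (hz_zsum hd₂).2
    have h2 : 2 / d₂ = 2 * Real.sqrt k / (π * s) := by
      rw [hd2_def]; field_simp
    have h3 : (2:ℝ) * (3 + 2 * Real.sqrt k / (π * s)) ≤ C₂ * Real.sqrt k := by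
      rw [hC2_def]
      have hps : 0 < π * s := by positivity
      have : 2 * Real.sqrt k / (π * s) = (2 / (π * s)) * Real.sqrt k := by ring
      rw [this]
      have h4 : (3:ℝ) ≤ 3 * Real.sqrt k := by nlinarith
      have h5 : (2:ℝ) / (π * s) ≤ (2 / (π * s)) * Real.sqrt k := by
        nlinarith [div_nonneg (by norm_num : (0:ℝ) ≤ 2) hps.le]
      ring_nf
      nlinarith [div_nonneg (by norm_num : (0:ℝ) ≤ 2) hps.le]
    calc 2 * ∑' n, 1 / (1 + d₂ * hzGz n) ^ 2 ≤ 2 * (3 + 2 / d₂) := by linarith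
      _ = 2 * (3 + 2 * Real.sqrt k / (π * s)) := by rw [h2]
      _ ≤ C₂ * Real.sqrt k := h3
  -- the cell map
  set Φ : L → ℤ × ℤ × ℤ := fun p =>
    (⌊(p : ℂ × ℝ).1.re / s⌋, ⌊(p : ℂ × ℝ).1.im / s⌋, ⌊(p : ℂ × ℝ).2 / s⌋) with hΦ_def
  have hΦinj : Function.Injective Φ := by
    intro p q hpq
    by_contra hne
    have hne' : (p : ℂ × ℝ) ≠ (q : ℂ × ℝ) := Subtype.coe_ne_coe.mpr hne
    have hsep' := hsep (p : ℂ × ℝ) p.2 (q : ℂ × ℝ) q.2 hne'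
    rw [hΦ_def] at hpq
    simp only [Prod.mk.injEq] at hpq
    have h1 : |(p : ℂ × ℝ).1.re - (q : ℂ × ℝ).1.re| < s := hz_coord_diff hs hpq.1
    have h2 : |(p : ℂ × ℝ).1.im - (q : ℂ × ℝ).1.im| < s := hz_coord_diff hs hpq.2.1
    have h3 : |(p : ℂ × ℝ).2 - (q : ℂ × ℝ).2| < s := hz_coord_diff hs hpq.2.2
    have hnormsq : ‖(p : ℂ × ℝ).1 - (q : ℂ × ℝ).1‖ ^ 2 =
        ((p : ℂ × ℝ).1.re - (q : ℂ × ℝ).1.re)^2 + ((p : ℂ × ℝ).1.im - (q : ℂ × ℝ).1.im)^2 := by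
      rw [Complex.sq_norm, Complex.normSq_apply, Complex.sub_re,
        Complex.sub_im]
      ring
    have hlt : ‖(p : ℂ × ℝ).1 - (q : ℂ × ℝ).1‖ ^ 2 + ((p : ℂ × ℝ).2 - (q : ℂ × ℝ).2)^2 < ε^2 := by
      rw [hnormsq]
      have e1 := sq_abs ((p : ℂ × ℝ).1.re - (q : ℂ × ℝ).1.re)
      have e2 := sq_abs ((p : ℂ × ℝ).1.im - (q : ℂ × ℝ).1.im)
      have e3 := sq_abs ((p : ℂ × ℝ).2 - (q : ℂ × ℝ).2)
      have b1 : ((p : ℂ × ℝ).1.re - (q : ℂ × ℝ).1.re)^2 < s^2 := by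
        rw [← e1]; exact pow_lt_pow_left₀ h1 (abs_nonneg _) (by norm_num) |>.trans_le le_rfl
      have b2 : ((p : ℂ × ℝ).1.im - (q : ℂ × ℝ).1.im)^2 < s^2 := by
        rw [← e2]; exact pow_lt_pow_left₀ h2 (abs_nonneg _) (by norm_num) |>.trans_le le_rfl
      have b3 : ((p : ℂ × ℝ).2 - (q : ℂ × ℝ).2)^2 < s^2 := by
        rw [← e3]; exact pow_lt_pow_left₀ h3 (abs_nonneg _) (by norm_num) |>.trans_le le_rfl
      have hseps : s^2 = ε^2/4 := by rw [hs_def]; ring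
      have hε2 : 0 < ε^2 := by positivity
      linarith
    have hcontra : Real.sqrt (‖(p : ℂ × ℝ).1 - (q : ℂ × ℝ).1‖ ^ 2 +
        ((p : ℂ × ℝ).2 - (q : ℂ × ℝ).2)^2) < ε := by
      rw [show ε = Real.sqrt (ε^2) from (Real.sqrt_sq hε.le).symm]
      apply Real.sqrt_lt_sqrt (by positivity) hlt
    linarith
  -- the dominating function on ℤ³
  set W : ℤ × ℤ → ℝ := fun w => F₁ w.1 * F₂ w.2 with hW_def
  set H : ℤ × ℤ × ℤ → ℝ := fun q => F₁ q.1 * W q.2 with hH_def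
  have hWs : Summable W := hF₁s.mul_of_nonneg hF₂s hF₁nn hF₂nn
  have hWnn : ∀ w, 0 ≤ W w := fun w => mul_nonneg (hF₁nn _) (hF₂nn _)
  have hHs : Summable H := hF₁s.mul_of_nonneg hWs hF₁nn hWnn
  have hHnn : ∀ q, 0 ≤ H q := fun q => mul_nonneg (hF₁nn _) (hWnn _)
  -- pointwise bound
  have hpt : ∀ p : L, ((k : ℝ) / (2 * Real.pi)) ^ k /
      ((((k : ℝ) / (2 * Real.pi) + ‖(p : ℂ × ℝ).1‖ ^ 2 / 2) ^ 2 +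
        (p : ℂ × ℝ).2 ^ 2) ^ ((k : ℝ) / 2)) ≤ H (Φ p) := by
    intro p
    set x : ℝ := (p : ℂ × ℝ).1.re with hx_def
    set y : ℝ := (p : ℂ × ℝ).1.im with hy_def
    set β : ℝ := (p : ℂ × ℝ).2 with hβ_def
    have hnorm : ‖(p : ℂ × ℝ).1‖ ^ 2 = x^2 + y^2 := by
      rw [Complex.sq_norm, Complex.normSq_apply]
      ring
    rw [hnorm]
    refine le_trans (hz_pointwise hk x y β) ?_
    rw [hH_def, hW_def, hΦ_def]
    simp only
    -- three factor comparisons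
    have hfac : ∀ u : ℝ, 1 / Real.sqrt (1 + (π^3/216) * u^6) ≤ F₁ ⌊u/s⌋ := by
      intro u
      have hm := hzGz_nonneg ⌊u/s⌋
      have habs : (s * hzGz ⌊u/s⌋)^6 ≤ u^6 := by
        have h6 : (s * hzGz ⌊u/s⌋)^6 ≤ |u|^6 :=
          pow_le_pow_left₀ (by positivity) (hz_floor_abs hs) 6
        rwa [← abs_pow, abs_of_nonneg (by positivity : (0:ℝ) ≤ u^6)] at h6
      have hstep : 1 / Real.sqrt (1 + (π^3/216) * u^6) ≤
          1 / Real.sqrt (1 + c * hzGz ⌊u/s⌋ ^ 6) := by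
        apply one_div_le_one_div_of_le
        · apply Real.sqrt_pos.mpr; positivity
        · apply Real.sqrt_le_sqrt
          have : c * hzGz ⌊u/s⌋ ^ 6 = (π^3/216) * (s * hzGz ⌊u/s⌋)^6 := by
            rw [hc_def]; ring
          rw [this]
          have := mul_le_mul_of_nonneg_left habs (by positivity : (0:ℝ) ≤ π^3/216)
          linarith
      refine hstep.trans ?_
      rw [hF1_def]
      simp only
      rw [mul_one_div]
      exact hz_sixth hc hm
    have hfac2 : 2 / (1 + π * |β| / Real.sqrt k)^2 ≤ F₂ ⌊β/s⌋ := by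
      rw [hF2_def]
      simp only
      rw [mul_one_div]
      have hsb : s * hzGz ⌊β/s⌋ ≤ |β| := hz_floor_abs hs
      have hb : d₂ * hzGz ⌊β/s⌋ ≤ π * |β| / Real.sqrt k := by
        rw [hd2_def]
        calc π * s / Real.sqrt k * hzGz ⌊β/s⌋ = π * (s * hzGz ⌊β/s⌋) / Real.sqrt k := by ring
          _ ≤ π * |β| / Real.sqrt k := by gcongr
      have hgz := hzGz_nonneg ⌊β/s⌋
      have hbase : (0:ℝ) < 1 + d₂ * hzGz ⌊β/s⌋ := by nlinarith
      apply div_le_div_of_nonneg_left (by norm_num : (0:ℝ) ≤ 2) (by positivity)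
      apply pow_le_pow_left₀ hbase.le (by linarith) 2
    calc (1 / Real.sqrt (1 + (π^3/216) * x^6)) * (1 / Real.sqrt (1 + (π^3/216) * y^6)) *
          (2 / (1 + π * |β| / Real.sqrt k)^2)
        ≤ F₁ ⌊x/s⌋ * F₁ ⌊y/s⌋ * F₂ ⌊β/s⌋ := by
          apply mul_le_mul
          · apply mul_le_mul (hfac x) (hfac y) (by positivity) (hF₁nn _)
          · exact hfac2
          · positivity
          · exact mul_nonneg (hF₁nn _) (hF₁nn _)
      _ = F₁ ⌊x/s⌋ * (F₁ ⌊y/s⌋ * F₂ ⌊β/s⌋) := by ring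
  -- summability of the original series
  have hfnn : ∀ p : L, 0 ≤ ((k : ℝ) / (2 * Real.pi)) ^ k /
      ((((k : ℝ) / (2 * Real.pi) + ‖(p : ℂ × ℝ).1‖ ^ 2 / 2) ^ 2 +
        (p : ℂ × ℝ).2 ^ 2) ^ ((k : ℝ) / 2)) := by
    intro p
    positivity
  have hfs : Summable (fun p : L => ((k : ℝ) / (2 * Real.pi)) ^ k /
      ((((k : ℝ) / (2 * Real.pi) + ‖(p : ℂ × ℝ).1‖ ^ 2 / 2) ^ 2 +
        (p : ℂ × ℝ).2 ^ 2) ^ ((k : ℝ) / 2))) :=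
    Summable.of_nonneg_of_le hfnn hpt (hHs.comp_injective hΦinj)
  refine ⟨hfs, ?_⟩
  -- the tsum of H
  have hHsum : ∑' q, H q = (∑' i, F₁ i) * ((∑' i, F₁ i) * (∑' n, F₂ n)) := by
    have hWsum : ∑' w, W w = (∑' i, F₁ i) * (∑' n, F₂ n) := by
      rw [Summable.tsum_prod' hWs (fun b => (hF₂s.mul_left (F₁ b)))]
      simp only [hW_def]
      simp only [tsum_mul_left]
      rw [tsum_mul_right]
    rw [Summable.tsum_prod' hHs (fun b => (hWs.mul_left (F₁ b)))]
    simp only [hH_def]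
    simp only [tsum_mul_left]
    rw [tsum_mul_right, hWsum]
  have hmain : ∑' p : L, ((k : ℝ) / (2 * Real.pi)) ^ k /
      ((((k : ℝ) / (2 * Real.pi) + ‖(p : ℂ × ℝ).1‖ ^ 2 / 2) ^ 2 +
        (p : ℂ × ℝ).2 ^ 2) ^ ((k : ℝ) / 2)) ≤ ∑' q, H q :=
    Summable.tsum_le_tsum_of_inj Φ hΦinj (fun q _ => hHnn q) hpt hfs hHs
  refine hmain.trans ?_
  rw [hHsum]
  have hT₁nn : 0 ≤ ∑' i, F₁ i := tsum_nonneg hF₁nn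
  have hT₂nn : 0 ≤ ∑' n, F₂ n := tsum_nonneg hF₂nn
  calc (∑' i, F₁ i) * ((∑' i, F₁ i) * (∑' n, F₂ n))
      ≤ C₁ * (C₁ * (C₂ * Real.sqrt k)) := by
        apply mul_le_mul hF₁b ?_ (mul_nonneg hT₁nn hT₂nn) hC₁pos.le
        apply mul_le_mul hF₁b hF₂b hT₂nn hC₁pos.le
    _ = C₁ * C₁ * C₂ * Real.sqrt k := by ring
end

section
/- For every real k > 3 and every real A > 0, ∫_0^∞ ∫_{−∞}^{∞} ((A + r²/2)² + β²)^{−k/2} dβ dr = (π/√2) · Γ((k−1)/2)·Γ(k−3/2) / (Γ(k/2)·Γ(k−1)) · A^{3/2−k}, where Γ denotes the real Gamma function. -/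
open MeasureTheory

open Real Set in
private lemma my_integrableOn {s : ℝ} (hs : 1 / 2 < s) :
    IntegrableOn (fun x : ℝ => (1 + x ^ 2) ^ (-s)) (Ioi 0) := by
  have hcont : Continuous fun x : ℝ => (1 + x ^ 2) ^ (-s) := by
    apply Continuous.rpow_const (by continuity)
    intro x; left; positivity
  rw [← Ioc_union_Ioi_eq_Ioi (zero_le_one (α := ℝ))]
  apply IntegrableOn.union
  · exact hcont.integrableOn_Ioc
  · have h1 : IntegrableOn (fun x : ℝ => x ^ (-(2 * s))) (Ioi 1) :=
      integrableOn_Ioi_rpow_of_lt (by linarith) one_pos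
    apply h1.mono' (hcont.aestronglyMeasurable.restrict)
    filter_upwards [ae_restrict_mem measurableSet_Ioi] with x hx
    have hx1 : (1 : ℝ) < x := hx
    have hx0 : (0 : ℝ) < x := by linarith
    rw [Real.norm_of_nonneg (by positivity)]
    have h2 : (x ^ 2 : ℝ) ^ (-s) = x ^ (-(2 * s)) := by
      rw [← Real.rpow_natCast x 2, ← Real.rpow_mul hx0.le]
      norm_num
    calc (1 + x ^ 2) ^ (-s) ≤ (x ^ 2 : ℝ) ^ (-s) :=
          Real.rpow_le_rpow_of_nonpos (by positivity) (by linarith) (by linarith)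
      _ = x ^ (-(2 * s)) := h2

open Real Set in
private lemma my_master {s : ℝ} (hs : 1 / 2 < s) :
    ∫ x in Ioi (0 : ℝ), (1 + x ^ 2) ^ (-s) =
      Real.sqrt π / 2 * (Real.Gamma (s - 1 / 2) / Real.Gamma s) := by
  have hs0 : 0 < s := by linarith
  have hΓ : 0 < Real.Gamma s := Real.Gamma_pos_of_pos hs0
  set f : ℝ → ℝ → ℝ := fun x t => t ^ (s - 1) * Real.exp (-(1 + x ^ 2) * t) with hfdef
  have hA : ∀ x : ℝ, ∫ t in Ioi (0 : ℝ), f x t = (1 + x ^ 2) ^ (-s) * Real.Gamma s := by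
    intro x
    have hb : (0 : ℝ) < 1 + x ^ 2 := by positivity
    have h := integral_rpow_mul_exp_neg_mul_rpow (p := 1) (q := s - 1) (b := 1 + x ^ 2)
      one_pos (by linarith) hb
    simp only [rpow_one] at h
    rw [hfdef]
    simp only []
    rw [h]
    norm_num
  have hslice : ∀ x : ℝ, IntegrableOn (fun t => f x t) (Ioi 0) := by
    intro x
    have hb : (0 : ℝ) < 1 + x ^ 2 := by positivity
    have h := integrableOn_rpow_mul_exp_neg_mul_rpow (p := 1) (s := s - 1) (b := 1 + x ^ 2)
      (by linarith) one_pos hb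
    simpa [hfdef, rpow_one] using h
  have hmeas : AEStronglyMeasurable (Function.uncurry f)
      ((volume.restrict (Ioi 0)).prod (volume.restrict (Ioi 0))) := by
    rw [Measure.prod_restrict]
    apply ContinuousOn.aestronglyMeasurable _ (measurableSet_Ioi.prod measurableSet_Ioi)
    apply ContinuousOn.mul
    · exact (continuous_snd.continuousOn).rpow_const
        (fun p hp => Or.inl (ne_of_gt hp.2))
    · exact ((((continuous_const.add
        (continuous_fst.pow 2)).neg).mul continuous_snd).rexp).continuousOn
  have hnorm : ∀ x : ℝ, (∫ t in Ioi (0 : ℝ), ‖f x t‖) = (1 + x ^ 2) ^ (-s) * Real.Gamma s := by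
    intro x
    rw [← hA x]
    refine setIntegral_congr_fun measurableSet_Ioi fun t ht => ?_
    have ht0 : (0 : ℝ) < t := ht
    have h1 : (0 : ℝ) ≤ f x t := by
      simp only [hfdef]
      positivity
    exact Real.norm_of_nonneg h1
  have hint : Integrable (Function.uncurry f)
      ((volume.restrict (Ioi 0)).prod (volume.restrict (Ioi 0))) := by
    rw [integrable_prod_iff hmeas]
    constructor
    · exact Filter.Eventually.of_forall fun x => hslice x
    · apply Integrable.congr ((my_integrableOn hs).mul_const (Real.Gamma s))
      exact Filter.Eventually.of_forall fun x => (hnorm x).symm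
  have hswap := integral_integral_swap hint
  have hL : (∫ x in Ioi (0 : ℝ), ∫ t in Ioi (0 : ℝ), f x t) =
      (∫ x in Ioi (0 : ℝ), (1 + x ^ 2) ^ (-s)) * Real.Gamma s := by
    rw [← integral_mul_const]
    exact setIntegral_congr_fun measurableSet_Ioi fun x _ => hA x
  have hR : (∫ t in Ioi (0 : ℝ), ∫ x in Ioi (0 : ℝ), f x t) =
      Real.sqrt π / 2 * Real.Gamma (s - 1 / 2) := by
    have step1 : ∀ t ∈ Ioi (0 : ℝ), (∫ x in Ioi (0 : ℝ), f x t) =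
        Real.sqrt π / 2 * (t ^ (s - 3 / 2) * Real.exp (-t)) := by
      intro t ht
      have ht0 : (0 : ℝ) < t := ht
      have h1 : ∀ x : ℝ, f x t = t ^ (s - 1) * Real.exp (-t) * Real.exp (-t * x ^ 2) := by
        intro x
        simp only [hfdef]
        rw [mul_assoc, ← Real.exp_add]
        congr 1
        · ring
      have hsq : Real.sqrt (π / t) = Real.sqrt π * t ^ (-(1 / 2) : ℝ) := by
        rw [Real.sqrt_eq_rpow, Real.div_rpow pi_pos.le ht0.le, Real.sqrt_eq_rpow,
          Real.rpow_neg ht0.le, div_eq_mul_inv]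
      calc (∫ x in Ioi (0 : ℝ), f x t)
          = ∫ x in Ioi (0 : ℝ), t ^ (s - 1) * Real.exp (-t) * Real.exp (-t * x ^ 2) :=
            setIntegral_congr_fun measurableSet_Ioi fun x _ => h1 x
        _ = t ^ (s - 1) * Real.exp (-t) * ∫ x in Ioi (0 : ℝ), Real.exp (-t * x ^ 2) :=
            integral_const_mul _ _
        _ = t ^ (s - 1) * Real.exp (-t) * (Real.sqrt (π / t) / 2) := by
            rw [integral_gaussian_Ioi]
        _ = Real.sqrt π / 2 * (t ^ (s - 3 / 2) * Real.exp (-t)) := by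
            rw [hsq, show (s - 3 / 2 : ℝ) = (s - 1) + (-(1 / 2)) by ring,
              Real.rpow_add ht0]
            ring
    rw [setIntegral_congr_fun measurableSet_Ioi step1, integral_const_mul]
    congr 1
    have h2 := integral_rpow_mul_exp_neg_rpow (p := 1) (q := s - 3 / 2) one_pos (by linarith)
    simp only [rpow_one] at h2
    rw [h2]
    norm_num
    congr 1
    ring
  rw [hL] at hswap
  rw [hR] at hswap
  field_simp at hswap ⊢
  linarith [hswap]

open Real Set in
private lemma my_scaled {c s : ℝ} (hc : 0 < c) :
    ∫ x in Ioi (0 : ℝ), (c ^ 2 + x ^ 2) ^ (-s) =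
      c ^ (1 - 2 * s) * ∫ x in Ioi (0 : ℝ), (1 + x ^ 2) ^ (-s) := by
  have h := integral_comp_mul_left_Ioi (fun x : ℝ => (c ^ 2 + x ^ 2) ^ (-s)) 0 hc
  rw [mul_zero] at h
  have h1 : ∀ x ∈ Ioi (0 : ℝ), ((c ^ 2 + (c * x) ^ 2) ^ (-s) : ℝ) =
      c ^ (-(2 * s)) * (1 + x ^ 2) ^ (-s) := by
    intro x hx
    have : (c ^ 2 + (c * x) ^ 2 : ℝ) = c ^ 2 * (1 + x ^ 2) := by ring
    rw [this, Real.mul_rpow (by positivity) (by positivity),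
      ← Real.rpow_natCast c 2, ← Real.rpow_mul hc.le]
    norm_num
  rw [setIntegral_congr_fun measurableSet_Ioi h1, integral_const_mul] at h
  rw [smul_eq_mul] at h
  have h2 : (∫ x in Ioi (0 : ℝ), (c ^ 2 + x ^ 2) ^ (-s)) =
      c * (c ^ (-(2 * s)) * ∫ x in Ioi (0 : ℝ), (1 + x ^ 2) ^ (-s)) := by
    rw [h, ← mul_assoc, mul_inv_cancel₀ hc.ne', one_mul]
  rw [h2, ← mul_assoc]
  congr 1
  rw [show (1 - 2 * s : ℝ) = 1 + (-(2 * s)) by ring, Real.rpow_add hc, Real.rpow_one]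

open Real Set in
private lemma my_line {c s : ℝ} (hc : 0 < c) :
    ∫ β : ℝ, (c ^ 2 + β ^ 2) ^ (-s) =
      2 * ∫ x in Ioi (0 : ℝ), (c ^ 2 + x ^ 2) ^ (-s) := by
  have h := integral_comp_abs (f := fun x : ℝ => (c ^ 2 + x ^ 2) ^ (-s))
  simp only [sq_abs] at h
  exact h

open Real Set in
/-- **Evaluation of the cusp-comparison integral**: for real `k > 3` and `A > 0`,
`∫_0^∞ ∫_{-∞}^∞ ((A + r²/2)² + β²)^{-k/2} dβ dr
  = (π/√2) Γ((k-1)/2) Γ(k-3/2) / (Γ(k/2) Γ(k-1)) · A^{3/2-k}`. -/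
theorem integral_cusp_comparison (k : ℝ) (hk : 3 < k) (A : ℝ) (hA : 0 < A) :
    (∫ r in Set.Ioi (0 : ℝ), ∫ β : ℝ, ((A + r ^ 2 / 2) ^ 2 + β ^ 2) ^ (-(k / 2))) =
      Real.pi / Real.sqrt 2 *
        (Real.Gamma ((k - 1) / 2) * Real.Gamma (k - 3 / 2) /
          (Real.Gamma (k / 2) * Real.Gamma (k - 1))) *
        A ^ (3 / 2 - k) := by
  have hs1 : (1 / 2 : ℝ) < k / 2 := by linarith
  have hs2 : (1 / 2 : ℝ) < k - 1 := by linarith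
  set I₁ : ℝ := ∫ x in Ioi (0 : ℝ), (1 + x ^ 2) ^ (-(k / 2)) with hI₁
  set I₂ : ℝ := ∫ x in Ioi (0 : ℝ), (1 + x ^ 2) ^ (-(k - 1)) with hI₂
  have hinner : ∀ r ∈ Ioi (0 : ℝ),
      (∫ β : ℝ, ((A + r ^ 2 / 2) ^ 2 + β ^ 2) ^ (-(k / 2))) =
        2 * I₁ * (A + r ^ 2 / 2) ^ (1 - k) := by
    intro r _
    have hc : (0 : ℝ) < A + r ^ 2 / 2 := by positivity
    rw [my_line hc, my_scaled hc, ← hI₁,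
      show (1 - 2 * (k / 2) : ℝ) = 1 - k by ring]
    ring
  rw [setIntegral_congr_fun measurableSet_Ioi hinner, integral_const_mul]
  set b : ℝ := Real.sqrt (2 * A) with hb
  have hb0 : 0 < b := Real.sqrt_pos.mpr (by linarith)
  have hb2 : b ^ 2 = 2 * A := Real.sq_sqrt (by linarith)
  have h := integral_comp_mul_left_Ioi (fun r : ℝ => (A + r ^ 2 / 2) ^ (1 - k)) 0 hb0
  rw [mul_zero, smul_eq_mul] at h
  have h1 : ∀ x ∈ Ioi (0 : ℝ), ((A + (b * x) ^ 2 / 2) ^ (1 - k) : ℝ) =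
      A ^ (1 - k) * (1 + x ^ 2) ^ (-(k - 1)) := by
    intro x hx
    have he : (A + (b * x) ^ 2 / 2 : ℝ) = A * (1 + x ^ 2) := by
      rw [mul_pow, hb2]; ring
    rw [he, Real.mul_rpow hA.le (by positivity)]
    congr 1
    rw [show (-(k - 1) : ℝ) = 1 - k by ring]
  rw [setIntegral_congr_fun measurableSet_Ioi h1, integral_const_mul] at h
  have hJ : (∫ r in Ioi (0 : ℝ), (A + r ^ 2 / 2) ^ (1 - k)) =
      b * (A ^ (1 - k) * I₂) := by
    rw [← hI₂] at h
    rw [h, ← mul_assoc, mul_inv_cancel₀ hb0.ne', one_mul]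
  rw [hJ]
  have hI₁v : I₁ = Real.sqrt π / 2 * (Real.Gamma ((k - 1) / 2) / Real.Gamma (k / 2)) := by
    rw [hI₁, my_master hs1, show (k / 2 - 1 / 2 : ℝ) = (k - 1) / 2 by ring]
  have hI₂v : I₂ = Real.sqrt π / 2 * (Real.Gamma (k - 3 / 2) / Real.Gamma (k - 1)) := by
    rw [hI₂, my_master hs2, show (k - 1 - 1 / 2 : ℝ) = k - 3 / 2 by ring]
  rw [hI₁v, hI₂v]
  have hbe : b = Real.sqrt 2 * Real.sqrt A := by
    rw [hb, Real.sqrt_mul (by norm_num)]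
  have hAr : Real.sqrt A * A ^ (1 - k) = A ^ (3 / 2 - k) := by
    rw [Real.sqrt_eq_rpow, ← Real.rpow_add hA]
    congr 1
    ring
  have hsq2 : Real.sqrt 2 * Real.sqrt 2 = 2 := Real.mul_self_sqrt (by norm_num)
  have hsqpi : Real.sqrt π * Real.sqrt π = π := Real.mul_self_sqrt Real.pi_pos.le
  have hs2pos : (0 : ℝ) < Real.sqrt 2 := by positivity
  rw [hbe]
  rw [show (2 : ℝ) * (Real.sqrt π / 2 * (Real.Gamma ((k - 1) / 2) / Real.Gamma (k / 2))) *
      (Real.sqrt 2 * Real.sqrt A *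
        (A ^ (1 - k) * (Real.sqrt π / 2 * (Real.Gamma (k - 3 / 2) / Real.Gamma (k - 1))))) =
      (Real.sqrt π * Real.sqrt π) * Real.sqrt 2 / 2 *
        (Real.Gamma ((k - 1) / 2) / Real.Gamma (k / 2) *
          (Real.Gamma (k - 3 / 2) / Real.Gamma (k - 1))) *
        (Real.sqrt A * A ^ (1 - k)) by ring]
  rw [hsqpi, hAr]
  congr 1
  rw [div_mul_div_comm]
  congr 1
  rw [div_eq_div_iff (by norm_num) hs2pos.ne']
  nlinarith [hsq2]
end
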